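/- In the loser-bid auction with tie-breaker favoring the high-valuation agent, for any bid b_h < c_h = v_h/2, the pure strategy b_h of the high-valuation agent is weakly dominated by the bid c_h. -/
import Mathlib


/-- Payoff to the high-valuation agent in the loser-bid auction when she bids `b` and the
low-valuation agent bids `r` (ties won by the high-valuation agent): the higher bidder wins
the object and pays the loser's bid to the other agent. -/
noncomputable def UhLB (vh : ℕ) (b r : ℕ) : ℝ := if r ≤ b then (vh : ℝ) - r else (b : ℝ)

/-- In the loser-bid auction, any bid `bh < ch = vh/2` of the high-valuation agent is weakly
dominated by the bid `ch`. -/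
theorem stmt16 (pbar vl vh cl ch : ℕ) (hvl : vl = 2 * cl) (hvh : vh = 2 * ch)
    (hcl : 0 < cl) (hclch : cl < ch) (hpbar : ch ≤ pbar)
    (bh : ℕ) (hbh : bh < ch) :
    (∀ r ≤ pbar, UhLB vh bh r ≤ UhLB vh ch r) ∧
    (∃ r ≤ pbar, UhLB vh bh r < UhLB vh ch r) := by
  constructor
  · intro r hr
    unfold UhLB
    subst hvh
    by_cases h1 : r ≤ bh
    · rw [if_pos h1, if_pos (h1.trans hbh.le)]
    · rw [if_neg h1]
      by_cases h2 : r ≤ ch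
      · rw [if_pos h2]
        push_cast
        have : (r : ℝ) ≤ ch := by exact_mod_cast h2
        have : (bh : ℝ) < ch := by exact_mod_cast hbh
        nlinarith
      · rw [if_neg h2]
        exact_mod_cast hbh.le
  · refine ⟨ch, hpbar, ?_⟩
    unfold UhLB
    subst hvh
    rw [if_neg (by omega), if_pos le_rfl]
    push_cast
    have : (bh : ℝ) < ch := by exact_mod_cast hbh
    nlinarith
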